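/- Let A, P ∈ ℝ^{N×N} with P symmetric positive definite. If P − A P Aᵀ is positive definite, then every eigenvalue λ ∈ ℂ of A (viewed as a complex matrix) satisfies |λ| < 1; in particular, for every z ∈ ℂ with |z| = 1 the matrix zI − A is invertible. -/

import Mathlib

open Matrix

lemma re_quad_pos {n : ℕ} {M : Matrix (Fin n) (Fin n) ℝ} (hM : M.PosDef)
    (x : Fin n → ℂ) (hx : x ≠ 0) :
    0 < (star x ⬝ᵥ (M.map (Complex.ofReal ·)) *ᵥ x).re := by
  have key : (star x ⬝ᵥ (M.map (Complex.ofReal ·)) *ᵥ x).re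
      = (fun i => (x i).re) ⬝ᵥ M *ᵥ (fun i => (x i).re)
        + (fun i => (x i).im) ⬝ᵥ M *ᵥ (fun i => (x i).im) := by
    simp only [dotProduct, mulVec, Pi.star_apply, map_apply, Complex.re_sum,
      Complex.mul_re, Complex.mul_im, Complex.ofReal_re, Complex.ofReal_im, RCLike.star_def,
      Complex.conj_re, Complex.conj_im, Finset.mul_sum, Finset.sum_mul,
      ← Finset.sum_add_distrib]
    congr 1; ext i; congr 1; ext j; ring
  rw [key]
  by_cases ha : (fun i => (x i).re) = 0
  · have hb : (fun i => (x i).im) ≠ 0 := by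
      intro hb
      exact hx (funext fun i => Complex.ext (congrFun ha i) (congrFun hb i))
    have := hM.dotProduct_mulVec_pos hb
    have h0 := hM.posSemidef.dotProduct_mulVec_nonneg (fun i => ((x i).re : ℝ))
    simp only [star_trivial] at this h0
    linarith
  · have := hM.dotProduct_mulVec_pos ha
    have h0 := hM.posSemidef.dotProduct_mulVec_nonneg (fun i => ((x i).im : ℝ))
    simp only [star_trivial] at this h0
    linarith

/-- Discrete-time Lyapunov (Stein) theorem: if `P` is symmetric positive definite and
`P − A P Aᵀ` is positive definite, then every eigenvalue of `A` (viewed as a complex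
matrix) has modulus strictly less than 1; in particular `zI − A` is invertible for
every `z` on the unit circle. -/
theorem schur_stable_of_stein {N : ℕ}
    (A P : Matrix (Fin N) (Fin N) ℝ) (hP : P.PosDef)
    (h : (P - A * P * Aᵀ).PosDef) :
    (∀ μ ∈ spectrum ℂ (A.map (Complex.ofReal ·)), ‖μ‖ < 1) ∧
    (∀ z : ℂ, ‖z‖ = 1 →
      IsUnit (z • (1 : Matrix (Fin N) (Fin N) ℂ) - A.map (Complex.ofReal ·))) := by
  set Ac := A.map (Complex.ofReal ·) with hAc
  set Pc := P.map (Complex.ofReal ·) with hPc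
  have hAT : Aᵀ.map (Complex.ofReal ·) = Acᴴ := by
    ext i j
    simp [hAc, conjTranspose_apply, Complex.conj_ofReal]
  have hmap : (P - A * P * Aᵀ).map (Complex.ofReal ·) = Pc - Ac * Pc * Acᴴ := by
    rw [← hAT]
    ext i j
    simp only [hAc, hPc, map_apply, Matrix.sub_apply, mul_apply]
    push_cast
    ring
  have main : ∀ μ ∈ spectrum ℂ Ac, ‖μ‖ < 1 := by
    intro μ hμ
    rw [spectrum.mem_iff] at hμ
    have hdet : ((algebraMap ℂ (Matrix (Fin N) (Fin N) ℂ) μ) - Ac).det = 0 := by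
      by_contra h0
      exact hμ ((Matrix.isUnit_iff_isUnit_det _).2 (Ne.isUnit h0))
    have hdet2 : (((algebraMap ℂ (Matrix (Fin N) (Fin N) ℂ) μ) - Ac)ᴴ).det = 0 := by
      rw [det_conjTranspose, hdet, star_zero]
    obtain ⟨v, hv0, hv⟩ := (Matrix.exists_mulVec_eq_zero_iff).2 hdet2
    have hvec : Acᴴ *ᵥ v = (starRingEnd ℂ) μ • v := by
      have : ((algebraMap ℂ (Matrix (Fin N) (Fin N) ℂ) μ) - Ac)ᴴ
          = (starRingEnd ℂ) μ • (1 : Matrix (Fin N) (Fin N) ℂ) - Acᴴ := by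
        rw [Algebra.algebraMap_eq_smul_one, conjTranspose_sub, conjTranspose_smul,
          conjTranspose_one]
        rfl
      rw [this, sub_mulVec, smul_mulVec, one_mulVec, sub_eq_zero] at hv
      exact hv.symm
    set q : ℂ := star v ⬝ᵥ Pc *ᵥ v with hq
    have hq_pos : 0 < q.re := re_quad_pos hP v hv0
    have hs_pos : 0 < (star v ⬝ᵥ ((P - A * P * Aᵀ).map (Complex.ofReal ·)) *ᵥ v).re :=
      re_quad_pos h v hv0
    have hcalc : star v ⬝ᵥ ((P - A * P * Aᵀ).map (Complex.ofReal ·)) *ᵥ v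
        = (1 - (Complex.normSq μ : ℂ)) * q := by
      rw [hmap, sub_mulVec, dotProduct_sub]
      have h1 : (Ac * Pc * Acᴴ) *ᵥ v = Ac *ᵥ (Pc *ᵥ (Acᴴ *ᵥ v)) := by
        simp [← mulVec_mulVec]
      have h2 : star v ⬝ᵥ (Ac *ᵥ (Pc *ᵥ (Acᴴ *ᵥ v))) = μ • star v ⬝ᵥ (Pc *ᵥ (Acᴴ *ᵥ v)) := by
        rw [dotProduct_mulVec]
        congr 1
        have := star_mulVec (M := Acᴴ) (v := v)
        rw [conjTranspose_conjTranspose] at this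
        rw [← this, hvec]
        ext i
        simp [Pi.smul_apply, smul_eq_mul]
      rw [h1, h2, hvec]
      rw [mulVec_smul, dotProduct_smul, smul_dotProduct]
      simp only [smul_eq_mul, ← hq]
      rw [← mul_assoc, ← Complex.normSq_eq_conj_mul_self]
      ring
    rw [hcalc] at hs_pos
    have hre : ((1 - (Complex.normSq μ : ℂ)) * q).re = (1 - Complex.normSq μ) * q.re := by
      simp [Complex.mul_re, Complex.sub_im, Complex.ofReal_im]
    rw [hre] at hs_pos
    have hn : Complex.normSq μ < 1 := by nlinarith
    have hsq := Complex.sq_norm μ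
    by_contra hge
    push_neg at hge
    nlinarith [norm_nonneg μ]
  refine ⟨main, fun z hz => ?_⟩
  rw [← Algebra.algebraMap_eq_smul_one]
  rw [← spectrum.notMem_iff]
  intro hmem
  exact absurd hz (by linarith [main z hmem])
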